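/- For every complex number z with Re(z) > 1, one has (1 − 2^{1−z})·ζ(z) = 1 + ∑_{r ∈ S} (−1)^{r−1}/(r^z − 1), where S is the set of integers r ≥ 2 that are not perfect powers and the series converges absolutely. -/

import Mathlib

/-- The set of integers `r ≥ 2` that are not perfect powers, i.e. not of the form
`a ^ k` with `a ≥ 2` and `k ≥ 2`. -/
def nonPerfectPowers : Set ℕ :=
  {r | 2 ≤ r ∧ ¬ ∃ a k : ℕ, 2 ≤ a ∧ 2 ≤ k ∧ a ^ k = r}

/-- gcd of the exponents in the prime factorization. -/
def expGcd (n : ℕ) : ℕ := n.factorization.support.gcd n.factorization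

lemma expGcd_dvd (n p : ℕ) : expGcd n ∣ n.factorization p := by
  by_cases hp : p ∈ n.factorization.support
  · exact Finset.gcd_dvd hp
  · simp [Finsupp.notMem_support_iff.mp hp]

lemma expGcd_pos {n : ℕ} (hn : 2 ≤ n) : 0 < expGcd n := by
  obtain ⟨p, hp⟩ := (Nat.nonempty_primeFactors.mpr hn).exists_mem
  rw [← Nat.support_factorization] at hp
  rw [pos_iff_ne_zero]
  intro h
  exact Finsupp.mem_support_iff.mp hp (Finset.gcd_eq_zero_iff.mp h p hp)

lemma exists_pow_eq_of_dvd {n k : ℕ} (hn : n ≠ 0) (h : ∀ p, k ∣ n.factorization p) :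
    ∃ a, a ^ k = n := by
  refine ⟨n.factorization.prod fun p e => p ^ (e / k), ?_⟩
  calc (n.factorization.prod fun p e => p ^ (e / k)) ^ k
      = n.factorization.prod fun p e => p ^ e := by
        rw [Finsupp.prod, Finsupp.prod, ← Finset.prod_pow]
        exact Finset.prod_congr rfl fun p _ => by
          rw [← pow_mul, Nat.div_mul_cancel (h p)]
    _ = n := Nat.factorization_prod_pow_eq_self hn

lemma exists_pow_expGcd {n : ℕ} (hn : 2 ≤ n) : ∃ a, 2 ≤ a ∧ a ^ expGcd n = n := by
  obtain ⟨a, ha⟩ := exists_pow_eq_of_dvd (by omega) (expGcd_dvd n)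
  refine ⟨a, ?_, ha⟩
  rcases Nat.lt_or_ge a 2 with h | h
  · have hd := expGcd_pos hn
    interval_cases a
    · rw [zero_pow (by omega)] at ha; omega
    · rw [one_pow] at ha; omega
  · exact h

lemma expGcd_pow {r m : ℕ} (hr : 2 ≤ r) (hm : m ≠ 0) : expGcd (r ^ m) = m * expGcd r := by
  have hsupp : (r ^ m).factorization.support = r.factorization.support := by
    rw [Nat.factorization_pow]
    exact Finsupp.support_smul_eq hm
  unfold expGcd
  rw [hsupp]
  have : ∀ p ∈ r.factorization.support, (r ^ m).factorization p = m * r.factorization p := by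
    intro p _; rw [Nat.factorization_pow]; rfl
  rw [Finset.gcd_congr rfl this, Finset.gcd_mul_left]
  simp

lemma mem_nonPerfectPowers_iff {r : ℕ} (hr : 2 ≤ r) :
    r ∈ nonPerfectPowers ↔ expGcd r = 1 := by
  constructor
  · intro h
    by_contra hne
    have h2 : 2 ≤ expGcd r := by have := expGcd_pos hr; omega
    obtain ⟨a, ha2, ha⟩ := exists_pow_expGcd hr
    exact h.2 ⟨a, expGcd r, ha2, h2, ha⟩
  · rintro h1
    refine ⟨hr, ?_⟩
    rintro ⟨a, k, ha, hk, rfl⟩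
    have h2a : 2 ≤ a := ha
    have he : expGcd (a ^ k) = k * expGcd a := expGcd_pow h2a (by omega)
    have hp := expGcd_pos h2a
    rw [he] at h1
    nlinarith

lemma unique_rep {r s a b : ℕ} (hr : r ∈ nonPerfectPowers) (hs : s ∈ nonPerfectPowers)
    (ha : a ≠ 0) (hb : b ≠ 0) (h : r ^ a = s ^ b) : r = s ∧ a = b := by
  have hr2 := hr.1
  have hs2 := hs.1
  have h1 : expGcd (r ^ a) = a := by
    rw [expGcd_pow hr2 ha, (mem_nonPerfectPowers_iff hr2).mp hr, mul_one]
  have h2 : expGcd (s ^ b) = b := by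
    rw [expGcd_pow hs2 hb, (mem_nonPerfectPowers_iff hs2).mp hs, mul_one]
  have hab : a = b := by rw [← h1, ← h2, h]
  subst hab
  exact ⟨Nat.pow_left_injective (by omega) h, rfl⟩

lemma exists_rep {n : ℕ} (hn : 2 ≤ n) :
    ∃ r m : ℕ, r ∈ nonPerfectPowers ∧ m ≠ 0 ∧ r ^ m = n := by
  obtain ⟨r, hr2, hrn⟩ := exists_pow_expGcd hn
  have hd := expGcd_pos hn
  refine ⟨r, expGcd n, ?_, by omega, hrn⟩
  rw [mem_nonPerfectPowers_iff hr2]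
  have he := expGcd_pow hr2 (Nat.pos_iff_ne_zero.mp hd)
  rw [hrn] at he
  nlinarith [expGcd_pos hr2]

/-- The bijection `(r, m) ↦ r ^ (m + 1)` from pairs of a non-perfect-power and an
exponent onto the integers `≥ 2`. -/
noncomputable def powEquiv : (Σ _r : nonPerfectPowers, ℕ) ≃ {n : ℕ // 2 ≤ n} :=
  Equiv.ofBijective
    (fun p => ⟨(p.1 : ℕ) ^ (p.2 + 1), Nat.one_lt_pow (Nat.succ_ne_zero _) p.1.2.1⟩)
    (by
      constructor
      · rintro ⟨⟨r, hr⟩, a⟩ ⟨⟨s, hs⟩, b⟩ h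
        simp only [Subtype.mk_eq_mk] at h
        obtain ⟨h1, h2⟩ := unique_rep hr hs (Nat.succ_ne_zero a) (Nat.succ_ne_zero b) h
        subst h1
        obtain rfl : a = b := by omega
        rfl
      · rintro ⟨n, hn⟩
        obtain ⟨r, m, hr, hm, hrm⟩ := exists_rep hn
        refine ⟨⟨⟨r, hr⟩, m - 1⟩, ?_⟩
        simp only [Subtype.mk_eq_mk]
        rw [Nat.sub_add_cancel (Nat.one_le_iff_ne_zero.mpr hm)]
        exact hrm)

theorem one_sub_two_pow_mul_zeta_eq_alternating_tsum
    (z : ℂ) (hz : 1 < z.re) :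
    Summable (fun r : nonPerfectPowers =>
      ‖(-1 : ℂ) ^ ((r : ℕ) - 1) / (((r : ℕ) : ℂ) ^ z - 1)‖) ∧
    (1 - (2 : ℂ) ^ (1 - z)) * riemannZeta z =
      1 + ∑' r : nonPerfectPowers,
        (-1 : ℂ) ^ ((r : ℕ) - 1) / (((r : ℕ) : ℂ) ^ z - 1) := by
  have hz0 : z ≠ 0 := Complex.ne_zero_of_one_lt_re hz
  have hx0 : z.re ≠ 0 := by intro h; rw [h] at hz; norm_num at hz
  set F : ℕ → ℂ := fun n => (-1 : ℂ) ^ (n - 1) / (n : ℂ) ^ z with hF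
  -- norms of F
  have hnorm : ∀ n : ℕ, ‖F n‖ = ((n : ℝ) ^ z.re)⁻¹ := by
    intro n
    rcases Nat.eq_zero_or_pos n with rfl | hn
    · simp [hF, Complex.zero_cpow hz0, Real.zero_rpow hx0]
    · simp only [hF, norm_div, norm_pow, norm_neg, norm_one, one_pow, one_div,
        Complex.norm_natCast_cpow_of_pos hn]
  have hFnormS : Summable fun n : ℕ => ‖F n‖ := by
    rw [show (fun n : ℕ => ‖F n‖) = fun n : ℕ => ((n : ℝ) ^ z.re)⁻¹ from funext hnorm]
    exact (Real.summable_nat_rpow_inv).mpr hz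
  have hFs : Summable F := hFnormS.of_norm
  -- ζ as a sum
  set G : ℕ → ℂ := fun n => 1 / (n : ℂ) ^ z with hG
  have hGs : Summable G := Complex.summable_one_div_nat_cpow.mpr hz
  have hζ : riemannZeta z = ∑' n : ℕ, G n := zeta_eq_tsum_one_div_nat_cpow hz
  -- even part of G
  have heven : ∀ k : ℕ, G (2 * k) = (2 : ℂ) ^ (-z) * G k := by
    intro k
    simp only [hG]
    rw [Nat.cast_mul, Complex.natCast_mul_natCast_cpow, Complex.cpow_neg,
      one_div, one_div, mul_inv, ← one_div, ← one_div]
    norm_num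
  have hGe : Summable fun k : ℕ => G (2 * k) :=
    (hGs.mul_left ((2 : ℂ) ^ (-z))).congr fun k => (heven k).symm
  have hGo : Summable fun k : ℕ => G (2 * k + 1) :=
    hGs.comp_injective fun a b h => by omega
  have htsum_even : ∑' k : ℕ, G (2 * k) = (2 : ℂ) ^ (-z) * ∑' k : ℕ, G k := by
    rw [tsum_congr heven, tsum_mul_left]
  -- F in terms of G on evens and odds
  have hFe : ∀ k : ℕ, F (2 * k) = -G (2 * k) := by
    intro k
    rcases Nat.eq_zero_or_pos k with rfl | hk
    · simp [hF, hG, Complex.zero_cpow hz0]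
    · have hodd : Odd (2 * k - 1) :=
        Nat.Even.sub_odd (by omega) (even_two_mul k) odd_one
      simp only [hF, hG, hodd.neg_one_pow]
      rw [neg_div, one_div]
  have hFo : ∀ k : ℕ, F (2 * k + 1) = G (2 * k + 1) := by
    intro k
    have : (2 * k + 1) - 1 = 2 * k := by omega
    simp only [hF, hG, this, (even_two_mul k).neg_one_pow]
  have hFeS : Summable fun k : ℕ => F (2 * k) :=
    hGe.neg.congr fun k => (hFe k).symm
  have hFoS : Summable fun k : ℕ => F (2 * k + 1) :=
    hGo.congr fun k => (hFo k).symm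
  -- the alternating sum equals (1 - 2^(1-z)) ζ
  have h2 : (2 : ℂ) ^ (1 - z) = 2 * (2 : ℂ) ^ (-z) := by
    rw [sub_eq_add_neg, Complex.cpow_add _ _ two_ne_zero, Complex.cpow_one]
  have hFsum : ∑' n : ℕ, F n = (1 - (2 : ℂ) ^ (1 - z)) * riemannZeta z := by
    have e1 := tsum_even_add_odd hFeS hFoS
    rw [tsum_congr hFe, tsum_congr hFo, tsum_neg, htsum_even] at e1
    have e2 := tsum_even_add_odd hGe hGo
    rw [htsum_even] at e2
    rw [hζ, ← e1, h2]
    linear_combination e2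
  -- peel off the first two terms
  have hF0 : F 0 = 0 := by simp [hF, Complex.zero_cpow hz0]
  have hF1 : F 1 = 1 := by simp [hF]
  have hFs1 : Summable fun n : ℕ => F (n + 1) := (summable_nat_add_iff 1).mpr hFs
  let eShift : ℕ ≃ {n : ℕ // 2 ≤ n} :=
    { toFun := fun n => ⟨n + 2, le_add_self⟩
      invFun := fun m => (m : ℕ) - 2
      left_inv := fun n => by simp
      right_inv := fun m => by
        ext
        simp [Nat.sub_add_cancel m.2] }
  have hsub : Summable fun m : {n : ℕ // 2 ≤ n} => F m := hFs.subtype _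
  have hshift : ∑' n : ℕ, F (n + 2) = ∑' m : {n : ℕ // 2 ≤ n}, F m := by
    rw [← eShift.tsum_eq fun m : {n : ℕ // 2 ≤ n} => F m]
    exact tsum_congr fun n => rfl
  have hpeel : ∑' n : ℕ, F n = 1 + ∑' m : {n : ℕ // 2 ≤ n}, F m := by
    rw [Summable.tsum_eq_zero_add hFs, Summable.tsum_eq_zero_add hFs1, hF0, zero_add, hF1, ← hshift]
  -- sigma decomposition
  have hHs : Summable fun p : Σ _r : nonPerfectPowers, ℕ => F ((powEquiv p : ℕ)) :=
    (powEquiv.summable_iff (f := fun m : {n : ℕ // 2 ≤ n} => F m)).mpr hsub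
  have hHnormS : Summable fun p : Σ _r : nonPerfectPowers, ℕ => ‖F ((powEquiv p : ℕ))‖ :=
    (powEquiv.summable_iff (f := fun m : {n : ℕ // 2 ≤ n} => ‖F m‖)).mpr (hFnormS.subtype _)
  have hsigma : ∑' m : {n : ℕ // 2 ≤ n}, F m
      = ∑' r : nonPerfectPowers, ∑' m : ℕ, F ((r : ℕ) ^ (m + 1)) := by
    rw [← powEquiv.tsum_eq fun m : {n : ℕ // 2 ≤ n} => F m]
    exact Summable.tsum_sigma hHs
  -- evaluation of the inner geometric sums
  have hinner : ∀ r : ℕ, 2 ≤ r →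
      ∑' m : ℕ, F (r ^ (m + 1)) = (-1 : ℂ) ^ (r - 1) / ((r : ℂ) ^ z - 1) := by
    intro r hr
    have hrnorm : ‖(r : ℂ) ^ z‖ = (r : ℝ) ^ z.re :=
      Complex.norm_natCast_cpow_of_pos (by omega) z
    have hr1 : (1 : ℝ) < (r : ℝ) := by exact_mod_cast (by omega : 1 < r)
    have hgt : 1 < (r : ℝ) ^ z.re := by
      rw [show (1:ℝ) = (r:ℝ) ^ (0:ℝ) by rw [Real.rpow_zero]]
      exact Real.rpow_lt_rpow_left_iff hr1 |>.mpr (by linarith)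
    have hne0 : (r : ℂ) ^ z ≠ 0 := by
      intro h; rw [h] at hrnorm; simp at hrnorm; linarith
    have hne1 : (r : ℂ) ^ z - 1 ≠ 0 := by
      intro h
      have : (r : ℂ) ^ z = 1 := by linear_combination h
      rw [this] at hrnorm; simp at hrnorm; linarith
    set w : ℂ := ((r : ℂ) ^ z)⁻¹ with hw
    have hwlt : ‖w‖ < 1 := by
      rw [hw, norm_inv, hrnorm]
      exact inv_lt_one_of_one_lt₀ hgt
    have h1w : (1 : ℂ) - w ≠ 0 := by
      intro h
      have hw1 : w = 1 := by linear_combination -h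
      rw [hw1] at hwlt; simp at hwlt
    have hterm : ∀ m : ℕ, F (r ^ (m + 1)) = (-1 : ℂ) ^ (r - 1) * w ^ (m + 1) := by
      intro m
      have hpow : ((r ^ (m + 1) : ℕ) : ℂ) ^ z = ((r : ℂ) ^ z) ^ (m + 1) := by
        rw [Nat.cast_pow, ← Complex.natCast_cpow_natCast_mul, Complex.cpow_nat_mul]
      have hsign : (-1 : ℂ) ^ (r ^ (m + 1) - 1) = (-1 : ℂ) ^ (r - 1) := by
        rcases Nat.even_or_odd r with he | ho
        · have h1 : Odd (r - 1) := Nat.Even.sub_odd (by omega) he odd_one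
          have h2 : Odd (r ^ (m + 1) - 1) :=
            Nat.Even.sub_odd (Nat.one_le_pow _ _ (by omega))
              ((Nat.even_pow.mpr ⟨he, Nat.succ_ne_zero m⟩)) odd_one
          rw [h1.neg_one_pow, h2.neg_one_pow]
        · have h1 : Even (r - 1) := Nat.Odd.sub_odd ho odd_one
          have h2 : Even (r ^ (m + 1) - 1) := Nat.Odd.sub_odd (ho.pow) odd_one
          rw [h1.neg_one_pow, h2.neg_one_pow]
      show (-1 : ℂ) ^ (r ^ (m + 1) - 1) / ((r ^ (m + 1) : ℕ) : ℂ) ^ z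
          = (-1 : ℂ) ^ (r - 1) * w ^ (m + 1)
      rw [hsign, hpow, div_eq_mul_inv, hw, inv_pow]
    have hsum1 : ∑' m : ℕ, w ^ (m + 1) = w * (1 - w)⁻¹ := by
      calc ∑' m : ℕ, w ^ (m + 1) = ∑' m : ℕ, w * w ^ m :=
            tsum_congr fun m => by rw [pow_succ, mul_comm]
        _ = w * ∑' m : ℕ, w ^ m := tsum_mul_left
        _ = w * (1 - w)⁻¹ := by rw [tsum_geometric_of_norm_lt_one hwlt]
    calc ∑' m : ℕ, F (r ^ (m + 1)) = ∑' m : ℕ, (-1 : ℂ) ^ (r - 1) * w ^ (m + 1) :=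
          tsum_congr hterm
      _ = (-1 : ℂ) ^ (r - 1) * (w * (1 - w)⁻¹) := by rw [tsum_mul_left, hsum1]
      _ = (-1 : ℂ) ^ (r - 1) / ((r : ℂ) ^ z - 1) := by
          rw [div_eq_mul_inv]
          congr 1
          rw [hw]
          field_simp
    -- end hinner
  have hinner' : ∀ r : nonPerfectPowers,
      ∑' m : ℕ, F ((r : ℕ) ^ (m + 1)) = (-1 : ℂ) ^ ((r : ℕ) - 1) / (((r : ℕ) : ℂ) ^ z - 1) :=
    fun r => hinner (r : ℕ) r.2.1
  constructor
  · -- summability of the norms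
    have hS1 : Summable fun r : nonPerfectPowers => ∑' m : ℕ, ‖F ((r : ℕ) ^ (m + 1))‖ :=
      hHnormS.sigma
    refine Summable.of_nonneg_of_le (fun r => norm_nonneg _) (fun r => ?_) hS1
    rw [← hinner' r]
    exact norm_tsum_le_tsum_norm (hHnormS.sigma_factor r)
  · rw [← hFsum, hpeel, hsigma]
    exact congrArg (1 + ·) (tsum_congr hinner')
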